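/- Let A and B be convex subsets of ℝⁿ and C a compact subset of ℝⁿ. If B + C ⊆ A + C (Minkowski sums), then B ⊆ A. -/

import Mathlib

open scoped Pointwise

open Set Filter Module Topology RealInnerProductSpace

variable {E : Type*} [NormedAddCommGroup E] [InnerProductSpace ℝ E] [FiniteDimensional ℝ E]

/-- Cesàro averaging: if `b + C ⊆ A + C` pointwise with `A` convex and `C`
compact nonempty, then `b ∈ closure A`. -/
lemma mem_closure_of_add_subset {A C : Set E} {b : E} (hA : Convex ℝ A)
    (hC : IsCompact C) (hCne : C.Nonempty)
    (hsub : ∀ c ∈ C, ∃ a ∈ A, ∃ c' ∈ C, b + c = a + c') : b ∈ closure A := by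
  choose! a ha g hg heq using hsub
  obtain ⟨c₀, hc₀⟩ := hCne
  set u : ℕ → E := fun k => g^[k] c₀ with hu_def
  have hu : ∀ k, u k ∈ C := by
    intro k
    induction k with
    | zero => simpa [hu_def] using hc₀
    | succ k ih =>
      have : u (k + 1) = g (u k) := Function.iterate_succ_apply' g k c₀
      rw [this]; exact hg _ ih
  have hsum : ∀ k : ℕ, ∑ i ∈ Finset.range k, a (u i) = (k : ℝ) • b + (c₀ - u k) := by
    intro k
    induction k with
    | zero => simp [hu_def]
    | succ k ih =>
      have h2 : a (u k) = b + u k - g (u k) := by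
        rw [eq_sub_iff_add_eq]
        exact (heq (u k) (hu k)).symm
      have h4 : u (k + 1) = g (u k) := Function.iterate_succ_apply' g k c₀
      rw [Finset.sum_range_succ, ih, h2, Nat.cast_succ, add_smul, one_smul, h4]
      abel
  have hmemA : ∀ k : ℕ, 0 < k → b + ((k : ℝ))⁻¹ • (c₀ - u k) ∈ A := by
    intro k hk
    have hk0 : (k : ℝ) ≠ 0 := Nat.cast_ne_zero.mpr hk.ne'
    have hmem : ∑ i ∈ Finset.range k, ((k : ℝ))⁻¹ • a (u i) ∈ A := by
      refine hA.sum_mem (fun i _ => by positivity) ?_ (fun i _ => ha _ (hu i))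
      rw [Finset.sum_const, Finset.card_range, nsmul_eq_mul]
      field_simp
    rwa [← Finset.smul_sum, hsum, smul_add, inv_smul_smul₀ hk0] at hmem
  obtain ⟨R, hR⟩ := hC.isBounded.exists_norm_le
  have hRb : ∀ k : ℕ, ‖c₀ - u k‖ ≤ 2 * R := by
    intro k
    calc ‖c₀ - u k‖ ≤ ‖c₀‖ + ‖u k‖ := norm_sub_le _ _
      _ ≤ R + R := add_le_add (hR _ hc₀) (hR _ (hu k))
      _ = 2 * R := by ring
  have htend : Tendsto (fun k : ℕ => b + ((k : ℝ))⁻¹ • (c₀ - u k)) atTop (𝓝 b) := by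
    rw [tendsto_iff_norm_sub_tendsto_zero]
    apply squeeze_zero' (Eventually.of_forall fun k => norm_nonneg _)
      (g := fun k : ℕ => (2 * R) / k)
    · filter_upwards [eventually_ge_atTop 1] with k hk
      have hk0 : (0:ℝ) < k := by exact_mod_cast hk
      have : ‖b + ((k : ℝ))⁻¹ • (c₀ - u k) - b‖ = ((k:ℝ))⁻¹ * ‖c₀ - u k‖ := by
        rw [add_sub_cancel_left, norm_smul, Real.norm_eq_abs, abs_of_pos (by positivity)]
      rw [this, div_eq_inv_mul]
      exact mul_le_mul_of_nonneg_left (hRb k) (by positivity)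
    · exact tendsto_const_div_atTop_nhds_zero_nat _
  refine mem_closure_of_tendsto htend ?_
  filter_upwards [eventually_ge_atTop 1] with k hk
  exact hmemA k hk

/-- Supporting hyperplane at a closure point not in the set. -/
lemma exists_support_functional {A : Set E} {b : E} (hA : Convex ℝ A) (hAne : A.Nonempty)
    (hb : b ∈ closure A) (hbA : b ∉ A) :
    ∃ f : E →L[ℝ] ℝ, (∀ a ∈ A, f a ≤ f b) ∧ ∃ a ∈ A, f a < f b := by
  set S : Submodule ℝ E := vectorSpan ℝ A with hS_def
  set K : Set E := A + (Sᗮ : Set E) with hK_def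
  have hK : Convex ℝ K := hA.add (Sᗮ).convex
  -- b lies in the affine span of A
  have hbaff : b ∈ (affineSpan ℝ A : Set E) := by
    have h1 : closure A ⊆ closure (affineSpan ℝ A : Set E) :=
      closure_mono (subset_affineSpan ℝ A)
    have h2 : IsClosed (affineSpan ℝ A : Set E) :=
      (affineSpan ℝ A).closed_of_finiteDimensional
    exact h2.closure_eq ▸ h1 hb
  -- membership in K for points of the affine span forces membership in A
  have hKA : ∀ x ∈ (affineSpan ℝ A : Set E), x ∈ K → x ∈ A := by
    intro x hxaff hxK
    obtain ⟨p, hp, w, hw, hpw⟩ := Set.mem_add.mp hxK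
    have hpx : x - p ∈ S := by
      have := AffineSubspace.vsub_mem_direction hxaff (subset_affineSpan ℝ A hp)
      rwa [direction_affineSpan] at this
    have hw0 : w = 0 := by
      have h0 : (inner ℝ (x - p) w : ℝ) = 0 := (Submodule.mem_orthogonal S w).mp hw _ hpx
      have hxpw : x - p = w := by rw [← hpw]; abel
      rw [hxpw] at h0
      exact inner_self_eq_zero.mp h0
    rw [hw0, add_zero] at hpw
    rwa [← hpw]
  -- a point of the intrinsic interior of A is in the interior of K
  obtain ⟨x, hx⟩ := hAne.intrinsicInterior hA
  have hxA : x ∈ A := intrinsicInterior_subset hx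
  have hxint : x ∈ interior K := by
    obtain ⟨y, hy, rfl⟩ := hx
    rw [mem_interior_iff_mem_nhds, Metric.mem_nhds_iff] at hy
    obtain ⟨ε, hε, hball⟩ := hy
    rw [mem_interior]
    refine ⟨Metric.ball (↑y) ε, ?_, Metric.isOpen_ball, Metric.mem_ball_self hε⟩
    intro v hv
    set w : E := ↑(Submodule.orthogonalProjection S (v - ↑y)) with hw_def
    have hwS : w ∈ S := (Submodule.orthogonalProjection S (v - ↑y)).2
    have hwnorm : ‖w‖ ≤ ‖v - ↑y‖ := by
      have h1 : ‖(Submodule.orthogonalProjection S) (v - ↑y)‖ ≤ ‖Submodule.orthogonalProjection S‖ * ‖v - ↑y‖ :=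
        (Submodule.orthogonalProjection S).le_opNorm _
      calc ‖w‖ = ‖(Submodule.orthogonalProjection S) (v - ↑y)‖ := rfl
        _ ≤ ‖Submodule.orthogonalProjection S‖ * ‖v - ↑y‖ := h1
        _ ≤ 1 * ‖v - ↑y‖ :=
            mul_le_mul_of_nonneg_right (Submodule.orthogonalProjection_norm_le S) (norm_nonneg _)
        _ = ‖v - ↑y‖ := one_mul _
    have hz : (↑y + w : E) ∈ (affineSpan ℝ A : Set E) := by
      have : w +ᵥ (↑y : E) ∈ affineSpan ℝ A := by
        refine AffineSubspace.vadd_mem_of_mem_direction ?_ y.2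
        rwa [direction_affineSpan]
      simpa [vadd_eq_add, add_comm] using this
    have hzA : (↑y + w : E) ∈ A := by
      have : (⟨↑y + w, hz⟩ : (affineSpan ℝ A : Set E)) ∈ Metric.ball y ε := by
        rw [Metric.mem_ball, Subtype.dist_eq]
        simp only [dist_eq_norm, add_sub_cancel_left]
        calc ‖w‖ ≤ ‖v - ↑y‖ := hwnorm
          _ < ε := by rwa [← dist_eq_norm]
      exact hball this
    have hperp : v - (↑y + w) ∈ Sᗮ := by
      have := Submodule.sub_starProjection_mem_orthogonal (K := S) (v - ↑y)
      have heq : v - (↑y + w) = (v - ↑y) - w := by abel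
      rwa [heq]
    exact Set.mem_add.mpr ⟨↑y + w, hzA, v - (↑y + w), hperp, by abel⟩
  -- b is not in the interior of K
  have hbK : b ∉ interior K := fun hbint => hbA (hKA b hbaff (interior_subset hbint))
  obtain ⟨f, hf⟩ := geometric_hahn_banach_open_point (hK.interior) isOpen_interior hbK
  refine ⟨f, ?_, ⟨x, hxA, ?_⟩⟩
  · intro p hp
    have hcomb : ∀ t : ℝ, t ∈ Set.Ioo (0:ℝ) 1 → t • x + (1 - t) • p ∈ interior K := by
      intro t ht
      exact hK.combo_interior_self_mem_interior hxint
        (Set.mem_add.mpr ⟨p, hp, 0, Submodule.zero_mem _, add_zero p⟩)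
        ht.1 (by linarith [ht.2]) (by ring)
    have htend : Tendsto (fun t : ℝ => t * f x + (1 - t) * f p) (𝓝[>] (0:ℝ)) (𝓝 (f p)) := by
      have hcont : Continuous fun t : ℝ => t * f x + (1 - t) * f p := by continuity
      have h0 := hcont.tendsto 0
      simp only [zero_mul, sub_zero, one_mul, zero_add] at h0
      exact h0.mono_left nhdsWithin_le_nhds
    refine le_of_tendsto htend ?_
    filter_upwards [Ioo_mem_nhdsGT_of_mem (show (0:ℝ) ∈ Set.Ico (0:ℝ) 1 by norm_num)]
      with t ht
    have := hf _ (hcomb t ht)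
    simpa using this.le
  · exact hf _ hxint

/-- Key induction on dimension. -/
lemma mem_of_add_subset (d : ℕ) :
    ∀ (A C : Set E) (b : E), Convex ℝ A → IsCompact C → C.Nonempty →
      (∀ c ∈ C, ∃ a ∈ A, ∃ c' ∈ C, b + c = a + c') →
      finrank ℝ (Submodule.span ℝ ((fun a => a - b) '' A)) ≤ d → b ∈ A := by
  induction d with
  | zero =>
    intro A C b hA hC hCne hsub hd
    obtain ⟨c₀, hc₀⟩ := hCne
    obtain ⟨a₀, ha₀, -⟩ := hsub c₀ hc₀
    have hbot : Submodule.span ℝ ((fun a => a - b) '' A) = ⊥ :=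
      Submodule.finrank_eq_zero.mp (Nat.le_zero.mp hd)
    have : a₀ - b = 0 := by
      have hmem : a₀ - b ∈ Submodule.span ℝ ((fun a => a - b) '' A) :=
        Submodule.subset_span ⟨a₀, ha₀, rfl⟩
      rwa [hbot, Submodule.mem_bot] at hmem
    have : a₀ = b := by rwa [sub_eq_zero] at this
    rwa [← this]
  | succ d ih =>
    intro A C b hA hC hCne hsub hd
    by_cases hbA : b ∈ A
    · exact hbA
    have hAne : A.Nonempty := by
      obtain ⟨c₀, hc₀⟩ := hCne
      obtain ⟨a₀, ha₀, -⟩ := hsub c₀ hc₀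
      exact ⟨a₀, ha₀⟩
    have hbcl : b ∈ closure A := mem_closure_of_add_subset hA hC hCne hsub
    obtain ⟨f, hfle, a₀, ha₀, hfa₀⟩ := exists_support_functional hA hAne hbcl hbA
    obtain ⟨cm, hcm, hmax⟩ := hC.exists_isMaxOn hCne f.continuous.continuousOn
    set A' : Set E := {a ∈ A | f a = f b} with hA'_def
    set C' : Set E := {c ∈ C | f c = f cm} with hC'_def
    have hlin : IsLinearMap ℝ (fun x : E => f x) := ⟨f.map_add, f.map_smul⟩
    have hA' : Convex ℝ A' := hA.inter (convex_hyperplane hlin (f b))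
    have hC' : IsCompact C' := hC.inter_right
      ((isClosed_singleton (x := f cm)).preimage f.continuous)
    have hC'ne : C'.Nonempty := ⟨cm, hcm, rfl⟩
    have hsub' : ∀ c ∈ C', ∃ a ∈ A', ∃ c' ∈ C', b + c = a + c' := by
      rintro c ⟨hcC, hcf⟩
      obtain ⟨a, ha, c'', hc'', heq⟩ := hsub c hcC
      have hfeq : f b + f c = f a + f c'' := by
        have := congrArg f heq
        simpa [map_add] using this
      have h1 : f a ≤ f b := hfle a ha
      have h2 : f c'' ≤ f cm := hmax hc''
      have h3 : f a = f b := by rw [hcf] at hfeq; linarith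
      have h4 : f c'' = f cm := by rw [hcf] at hfeq; linarith
      exact ⟨a, ⟨ha, h3⟩, c'', ⟨hc'', h4⟩, heq⟩
    -- dimension drop
    have hdim : finrank ℝ (Submodule.span ℝ ((fun a => a - b) '' A')) ≤ d := by
      have hle : Submodule.span ℝ ((fun a => a - b) '' A') ≤
          Submodule.span ℝ ((fun a => a - b) '' A) :=
        Submodule.span_mono (Set.image_mono (Set.sep_subset _ _))
      have hker : Submodule.span ℝ ((fun a => a - b) '' A') ≤ LinearMap.ker (f : E →ₗ[ℝ] ℝ) := by
        rw [Submodule.span_le]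
        rintro - ⟨a, ⟨haA, haf⟩, rfl⟩
        simp only [SetLike.mem_coe, LinearMap.mem_ker, ContinuousLinearMap.coe_coe, map_sub]
        rw [haf]; ring
      have hmem : a₀ - b ∈ Submodule.span ℝ ((fun a => a - b) '' A) :=
        Submodule.subset_span (Set.mem_image_of_mem _ ha₀)
      have hnmem : a₀ - b ∉ Submodule.span ℝ ((fun a => a - b) '' A') := by
        intro hmem'
        have := hker hmem'
        simp only [LinearMap.mem_ker, ContinuousLinearMap.coe_coe, map_sub] at this
        linarith
      have hlt : Submodule.span ℝ ((fun a => a - b) '' A') <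
          Submodule.span ℝ ((fun a => a - b) '' A) :=
        lt_of_le_of_ne hle (fun h => hnmem (h ▸ hmem))
      have := Submodule.finrank_lt_finrank_of_lt hlt
      omega
    exact (ih A' C' b hA' hC' hC'ne hsub' hdim).1

/-- Minkowski-sum cancellation: if `B + C ⊆ A + C` with `A`, `B` convex and
`C` compact nonempty in `ℝⁿ`, then `B ⊆ A`. -/
theorem minkowski_cancellation {n : ℕ}
    (A B C : Set (EuclideanSpace ℝ (Fin n)))
    (hA : Convex ℝ A) (hB : Convex ℝ B)
    (hC : IsCompact C) (hCne : C.Nonempty)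
    (h : B + C ⊆ A + C) : B ⊆ A := by
  intro b hb
  refine mem_of_add_subset (Module.finrank ℝ (EuclideanSpace ℝ (Fin n))) A C b hA hC hCne
    ?_ (Submodule.finrank_le _)
  intro c hc
  have : b + c ∈ A + C := h (Set.add_mem_add hb hc)
  obtain ⟨a, ha, c', hc', heq⟩ := Set.mem_add.mp this
  exact ⟨a, ha, c', hc', heq.symm⟩
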